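/- Let C be a convex subset of a finite-dimensional real vector space E whose intersection with every polytope is a polytope (C is locally polyhedral). Then C is closed. -/

import Mathlib

/-- A convex subset of a finite-dimensional real vector space whose intersection with every
polytope (convex hull of a finite set) is a polytope, is closed. -/
theorem locally_polyhedral_closed {E : Type*}
    [NormedAddCommGroup E] [NormedSpace ℝ E] [FiniteDimensional ℝ E]
    (C : Set E) (hC : Convex ℝ C)
    (hloc : ∀ Q : Set E, (∃ F : Finset E, Q = convexHull ℝ (F : Set E)) →
      ∃ G : Finset E, C ∩ Q = convexHull ℝ (G : Set E)) :
    IsClosed C := by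
  classical
  rw [← closure_subset_iff_isClosed]
  intro x hx
  obtain ⟨b, hxb, -⟩ := exists_mem_interior_convexHull_affineBasis
    (Filter.univ_mem : (Set.univ : Set E) ∈ nhds x)
  set Q : Set E := convexHull ℝ (Set.range b) with hQ
  have hQfin : ∃ F : Finset E, Q = convexHull ℝ (F : Set E) := by
    refine ⟨Finset.image b Finset.univ, ?_⟩
    rw [Finset.coe_image, Finset.coe_univ, Set.image_univ]
  obtain ⟨G, hG⟩ := hloc Q hQfin
  have hclosed : IsClosed (C ∩ Q) := by
    rw [hG]
    exact (G.finite_toSet.isCompact_convexHull (𝕜 := ℝ)).isClosed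
  have hxmem : x ∈ closure (C ∩ Q) := by
    rw [mem_closure_iff_nhds]
    intro U hU
    have hU' : U ∩ interior Q ∈ nhds x := Filter.inter_mem hU (isOpen_interior.mem_nhds hxb)
    obtain ⟨y, hyU, hyC⟩ := (mem_closure_iff_nhds.mp hx) _ hU'
    exact ⟨y, hyU.1, hyC, interior_subset hyU.2⟩
  exact (hclosed.closure_subset hxmem).1
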